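/- Let 0 < q < 1/2, 0 < λ < 1, and let G be a geometric random variable with parameter λ. Then E[h((1 - (1-2q)^G)/2)] = 1 - Σ_{k=1}^∞ (log₂e)/(2k(2k-1)) · λ(1-2q)^{2k}/(1 - (1-λ)(1-2q)^{2k}), where the series on the right converges. -/

import Mathlib

open Real Filter MeasureTheory

/-- Binary entropy function (base-2 logarithm), with `binEnt 0 = binEnt 1 = 0`. -/
noncomputable def binEnt (p : ℝ) : ℝ :=
  -p * Real.logb 2 p - (1 - p) * Real.logb 2 (1 - p)

/-- Inverse of the binary entropy function, mapping `[0,1]` onto `[0,1/2]`. -/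
noncomputable def binEntInv (y : ℝ) : ℝ :=
  sInf {p : ℝ | p ∈ Set.Icc (0:ℝ) (1/2) ∧ y ≤ binEnt p}

/-- Binary convolution `a*b := a(1-b) + b(1-a)`. -/
def bConv (a b : ℝ) : ℝ := a * (1 - b) + b * (1 - a)

/-- Shannon entropy (in bits) of a distribution on a finite type. -/
noncomputable def entropyDist {β : Type*} [Fintype β] (p : β → ℝ) : ℝ :=
  ∑ b, -(p b * Real.logb 2 (p b))

/-- Probability of the path `x` under the stationary symmetric binary Markov process with
transition probability `q`: the first coordinate is uniform (`Bernoulli(1/2)`) and each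
subsequent coordinate flips the previous one with probability `q`. -/
noncomputable def symPathProb (q : ℝ) (n : ℕ) (x : Fin n → Bool) : ℝ :=
  ∏ i : Fin n,
    if (i : ℕ) = 0 then (1/2 : ℝ)
    else if x ⟨(i : ℕ) - 1, Nat.lt_of_le_of_lt (Nat.sub_le _ _) i.isLt⟩ = x i then 1 - q else q

/-- Output distribution of a memoryless binary symmetric channel with crossover probability `a`
applied to an input with distribution `p` (each coordinate flipped independently w.p. `a`). -/
noncomputable def bscOutput {n : ℕ} (a : ℝ) (p : (Fin n → Bool) → ℝ) : (Fin n → Bool) → ℝ :=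
  fun y => ∑ x : Fin n → Bool, p x * ∏ i, (if y i = x i then 1 - a else a)

/-- Distribution of the projection onto the coordinates in `s` of a vector with distribution `p`. -/
noncomputable def projDist {n : ℕ} (p : (Fin n → Bool) → ℝ) (s : Finset (Fin n)) :
    ({ i // i ∈ s } → Bool) → ℝ :=
  fun y => ∑ x : Fin n → Bool, if (∀ i : { i // i ∈ s }, x i.val = y i) then p x else 0

/-- `H(X_S | S) = ∑_{s ⊆ [n]} P(S = s) H(X_s)`, where the random subset `S` contains each
element of `[n]` independently with probability `lam`. -/
noncomputable def condEntProj {n : ℕ} (lam : ℝ) (p : (Fin n → Bool) → ℝ) : ℝ :=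
  ∑ s : Finset (Fin n), lam ^ s.card * (1 - lam) ^ (n - s.card) * entropyDist (projDist p s)

/-- Transition kernel of a binary Markov chain: `P(b | a)` with off-diagonal entries
`q01 = P(1|0)` and `q10 = P(0|1)`. -/
def markovTrans (q01 q10 : ℝ) (a b : Bool) : ℝ :=
  if a then (if b then 1 - q10 else q10) else (if b then q01 else 1 - q01)

/-- Probability of the path `x` under the binary Markov chain with initial distribution
`(p0, p1)` and transition probabilities `q01, q10`. -/
noncomputable def markovPathProb (p0 p1 q01 q10 : ℝ) (n : ℕ) (x : Fin n → Bool) : ℝ :=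
  ∏ i : Fin n,
    if (i : ℕ) = 0 then (if x i then p1 else p0)
    else markovTrans q01 q10 (x ⟨(i : ℕ) - 1, Nat.lt_of_le_of_lt (Nat.sub_le _ _) i.isLt⟩) (x i)

lemma aux_even (x : ℝ) (h : |x| < 1) :
    HasSum (fun k : ℕ => x ^ (2 * k + 2) / (2 * (k : ℝ) + 2))
      (-(Real.log (1 - x) + Real.log (1 + x)) / 2) := by
  set term := fun n : ℕ => (-x) ^ (n + 1) / ((n : ℝ) + 1) + x ^ (n + 1) / ((n : ℝ) + 1) with hterm
  have hts : HasSum term (-Real.log (1 + x) + -Real.log (1 - x)) := by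
    have h1 := Real.hasSum_pow_div_log_of_abs_lt_one (x := -x) (by rwa [abs_neg])
    have h2 := Real.hasSum_pow_div_log_of_abs_lt_one h
    simpa [term, sub_neg_eq_add] using h1.add h2
  have hinj : Function.Injective (fun k : ℕ => 2 * k + 1) := fun a b hab => by simp only [] at hab; omega
  have hsupp : ∀ n ∉ Set.range (fun k : ℕ => 2 * k + 1), term n = 0 := by
    intro n hn
    have hne : Even n := by
      rcases Nat.even_or_odd n with he | ho
      · exact he
      · obtain ⟨m, hm⟩ := ho
        exact absurd ⟨m, hm.symm⟩ hn
    have hodd : Odd (n + 1) := Even.add_one hne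
    simp only [term, hodd.neg_pow]
    ring
  have h3 : HasSum (fun k : ℕ => term (2 * k + 1)) (-Real.log (1 + x) + -Real.log (1 - x)) :=
    (hinj.hasSum_iff hsupp).2 hts
  have h4 : HasSum (fun k : ℕ => (1/2 : ℝ) * term (2 * k + 1))
      ((1/2 : ℝ) * (-Real.log (1 + x) + -Real.log (1 - x))) := h3.mul_left _
  have hfun : (fun k : ℕ => (1/2 : ℝ) * term (2 * k + 1)) =
      fun k : ℕ => x ^ (2 * k + 2) / (2 * (k : ℝ) + 2) := by
    funext k
    have hp : (-x) ^ (2 * k + 1 + 1) = x ^ (2 * k + 1 + 1) :=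
      Even.neg_pow ⟨k + 1, by ring⟩ x
    simp only [term, hp]
    push_cast
    ring
  rw [hfun] at h4
  convert h4 using 1
  ring

lemma hasSum_one_sub_binEnt (x : ℝ) (hx0 : 0 < x) (hx1 : x < 1) :
    HasSum (fun k : ℕ => Real.logb 2 (Real.exp 1) / (2*((k:ℝ)+1) * (2*((k:ℝ)+1) - 1)) *
      x ^ (2*(k+1))) (1 - binEnt ((1 - x)/2)) := by
  have hax : |x| < 1 := abs_lt.2 ⟨by linarith, hx1⟩
  have hL : (0:ℝ) < Real.log 2 := Real.log_pos (by norm_num)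
  have hodd := (Real.hasSum_log_sub_log_of_abs_lt_one hax).mul_left (x/2)
  have heven := aux_even x hax
  have hdiff := (hodd.sub heven).div_const (Real.log 2)
  have hlogb : Real.logb 2 (Real.exp 1) = 1 / Real.log 2 := by
    rw [Real.logb, Real.log_exp]
  have hfun : (fun k : ℕ => (x/2 * (2 * (1/(2*(k:ℝ)+1)) * x ^ (2*k+1)) -
      x ^ (2*k+2) / (2*(k:ℝ)+2)) / Real.log 2) =
      fun k : ℕ => Real.logb 2 (Real.exp 1) / (2*((k:ℝ)+1) * (2*((k:ℝ)+1) - 1)) *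
        x ^ (2*(k+1)) := by
    funext k
    rw [hlogb]
    have h1 : (2*(k:ℝ)+1) ≠ 0 := by positivity
    have h2 : (2*(k:ℝ)+2) ≠ 0 := by positivity
    have h3 : 2*((k:ℝ)+1) * (2*((k:ℝ)+1) - 1) ≠ 0 := by nlinarith [Nat.cast_nonneg (α := ℝ) k]
    have hexp : 2*(k+1) = 2*k+2 := by omega
    rw [hexp]
    have hxp : x ^ (2*k+2) = x ^ (2*k+1) * x := by rw [pow_succ]
    field_simp
    ring_nf
    field_simp
    ring
  rw [hfun] at hdiff
  convert hdiff using 1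
  · rfl
  -- value equality
  have e1 : (1:ℝ) - (1-x)/2 = (1+x)/2 := by ring
  have hp1 : (0:ℝ) < 1 - x := by linarith
  have hp2 : (0:ℝ) < 1 + x := by linarith
  have l1 : Real.logb 2 ((1-x)/2) = (Real.log (1-x) - Real.log 2) / Real.log 2 := by
    rw [Real.logb, Real.log_div (ne_of_gt hp1) two_ne_zero]
  have l2 : Real.logb 2 ((1+x)/2) = (Real.log (1+x) - Real.log 2) / Real.log 2 := by
    rw [Real.logb, Real.log_div (ne_of_gt hp2) two_ne_zero]
  rw [binEnt, e1, l1, l2]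
  field_simp
  ring

/-- For `0 < q < 1/2`, `0 < λ < 1` and `G` geometric with parameter `λ`,
`E[h((1-(1-2q)^G)/2)] = 1 - Σ_{k≥1} (log₂e)/(2k(2k-1))·λ(1-2q)^{2k}/(1-(1-λ)(1-2q)^{2k})`,
and the series converges. -/
theorem geometric_entropy_series (q lam : ℝ) (hq : q ∈ Set.Ioo (0:ℝ) (1/2))
    (hlam : lam ∈ Set.Ioo (0:ℝ) 1) :
    Summable (fun k : ℕ => Real.logb 2 (Real.exp 1) / (2*((k:ℝ)+1) * (2*((k:ℝ)+1) - 1)) *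
        (lam * (1 - 2*q)^(2*(k+1)) / (1 - (1 - lam) * (1 - 2*q)^(2*(k+1))))) ∧
    (∑' g : ℕ, (1 - lam)^g * lam * binEnt ((1 - (1 - 2*q)^(g+1))/2)) =
      1 - ∑' k : ℕ, Real.logb 2 (Real.exp 1) / (2*((k:ℝ)+1) * (2*((k:ℝ)+1) - 1)) *
        (lam * (1 - 2*q)^(2*(k+1)) / (1 - (1 - lam) * (1 - 2*q)^(2*(k+1)))) := by
  obtain ⟨hq0, hq1⟩ := hq
  obtain ⟨hl0, hl1⟩ := hlam
  set θ : ℝ := 1 - 2*q with hθdef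
  set μ : ℝ := 1 - lam with hμdef
  set c : ℕ → ℝ := fun k =>
    Real.logb 2 (Real.exp 1) / (2*((k:ℝ)+1) * (2*((k:ℝ)+1) - 1)) with hcdef
  have hθ0 : 0 < θ := by rw [hθdef]; linarith
  have hθ1 : θ < 1 := by rw [hθdef]; linarith
  have hμ0 : 0 < μ := by rw [hμdef]; linarith
  have hμ1 : μ < 1 := by rw [hμdef]; linarith
  have hcpos : ∀ k : ℕ, 0 ≤ c k := by
    intro k
    apply div_nonneg
    · exact Real.logb_nonneg one_lt_two (Real.one_le_exp zero_le_one)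
    · nlinarith [Nat.cast_nonneg (α := ℝ) k]
  set a : ℕ → ℕ → ℝ := fun g k => μ^g * lam * (c k * (θ^(g+1)) ^ (2*(k+1))) with hadef
  have hxg : ∀ g : ℕ, 0 < θ^(g+1) ∧ θ^(g+1) < 1 := fun g =>
    ⟨pow_pos hθ0 _, pow_lt_one₀ hθ0.le hθ1 (Nat.succ_ne_zero g)⟩
  have hrow : ∀ g : ℕ, HasSum (fun k => a g k)
      (μ^g * lam * (1 - binEnt ((1 - θ^(g+1))/2))) := fun g =>
    (hasSum_one_sub_binEnt _ (hxg g).1 (hxg g).2).mul_left _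
  have hann : ∀ g k : ℕ, 0 ≤ a g k := fun g k => by
    have := hcpos k
    have := (hxg g).1
    positivity
  -- column sums
  have htk : ∀ k : ℕ, 0 < θ^(2*(k+1)) ∧ θ^(2*(k+1)) ≤ 1 := fun k =>
    ⟨pow_pos hθ0 _, pow_le_one₀ hθ0.le hθ1.le⟩
  have hrk : ∀ k : ℕ, 0 ≤ μ * θ^(2*(k+1)) ∧ μ * θ^(2*(k+1)) < 1 := fun k =>
    ⟨mul_nonneg hμ0.le (htk k).1.le,
      lt_of_le_of_lt (mul_le_of_le_one_right hμ0.le (htk k).2) hμ1⟩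
  have hcol : ∀ k : ℕ, HasSum (fun g => a g k)
      (c k * (lam * θ^(2*(k+1)) / (1 - μ * θ^(2*(k+1))))) := by
    intro k
    have hgeo := (hasSum_geometric_of_lt_one (hrk k).1 (hrk k).2).mul_left
      (c k * (lam * θ^(2*(k+1))))
    have hfun : (fun g : ℕ => c k * (lam * θ^(2*(k+1))) * (μ * θ^(2*(k+1)))^g) =
        fun g => a g k := by
      funext g
      have hp : (θ^(g+1)) ^ (2*(k+1)) = θ^(2*(k+1)) * (θ^(2*(k+1)))^g := by
        rw [← pow_mul, ← pow_mul, ← pow_add]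
        congr 1
        ring
      rw [hadef]
      simp only [hp, mul_pow]
      ring
    rw [hfun] at hgeo
    convert hgeo using 1
    · rfl
    rw [div_eq_mul_inv]
    ring
  -- summability on the product
  have hA : Summable (fun p : ℕ × ℕ => a p.1 p.2) := by
    rw [summable_prod_of_nonneg (fun p => hann p.1 p.2)]
    refine ⟨fun g => (hrow g).summable, ?_⟩
    have hb : ∀ g : ℕ, ∑' k, a g k ≤ μ^g * lam := by
      intro g
      rw [(hrow g).tsum_eq]
      have hbE : 0 ≤ binEnt ((1 - θ^(g+1))/2) := by
        have h1 : 0 < (1 - θ^(g+1))/2 := by have := (hxg g).2; linarith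
        have h2 : (1 - θ^(g+1))/2 ≤ 1 := by have := (hxg g).1; linarith
        have h3 : 0 < 1 - (1 - θ^(g+1))/2 := by have := (hxg g).1; linarith
        have h4 : 1 - (1 - θ^(g+1))/2 ≤ 1 := by have := (hxg g).2; linarith
        have l1 : Real.logb 2 ((1 - θ^(g+1))/2) ≤ 0 :=
          Real.logb_nonpos one_lt_two h1.le h2
        have l2 : Real.logb 2 (1 - (1 - θ^(g+1))/2) ≤ 0 :=
          Real.logb_nonpos one_lt_two h3.le h4
        rw [binEnt]
        nlinarith
      nlinarith [mul_nonneg (mul_nonneg (pow_pos hμ0 g).le hl0.le) hbE]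
    refine Summable.of_nonneg_of_le (fun g => tsum_nonneg (fun k => hann g k)) hb ?_
    exact (summable_geometric_of_lt_one hμ0.le hμ1).mul_right lam
  -- summability of columns-sums series
  have hAs : Summable (fun p : ℕ × ℕ => a p.2 p.1) := hA.prod_symm
  have hTs : Summable (fun k : ℕ => c k * (lam * θ^(2*(k+1)) / (1 - μ * θ^(2*(k+1))))) := by
    have := hAs.prod
    exact this.congr (fun k => (hcol k).tsum_eq)
  refine ⟨hTs, ?_⟩
  -- main equality
  have hgs : Summable (fun g : ℕ => μ^g * lam) :=
    (summable_geometric_of_lt_one hμ0.le hμ1).mul_right lam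
  have hsum2 : Summable (fun g : ℕ => ∑' k, a g k) := hA.prod
  have hterm : ∀ g : ℕ, μ^g * lam * binEnt ((1 - θ^(g+1))/2) =
      μ^g * lam - ∑' k, a g k := by
    intro g
    rw [(hrow g).tsum_eq]
    ring
  calc ∑' g : ℕ, μ^g * lam * binEnt ((1 - θ^(g+1))/2)
      = ∑' g : ℕ, (μ^g * lam - ∑' k, a g k) := tsum_congr hterm
    _ = (∑' g : ℕ, μ^g * lam) - ∑' g : ℕ, ∑' k, a g k := Summable.tsum_sub hgs hsum2
    _ = 1 - ∑' k : ℕ, ∑' g : ℕ, a g k := by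
        have hA' : Summable (Function.uncurry a) := hA
        have hcomm : ∑' g : ℕ, ∑' k : ℕ, a g k = ∑' k : ℕ, ∑' g : ℕ, a g k :=
          (Summable.tsum_comm (f := a) hA').symm
        have h1μ : (1 - μ)⁻¹ * lam = 1 := by
          rw [hμdef]
          have : (1:ℝ) - (1 - lam) = lam := by ring
          rw [this, inv_mul_cancel₀ (ne_of_gt hl0)]
        rw [tsum_mul_right, tsum_geometric_of_lt_one hμ0.le hμ1, hcomm, h1μ]
    _ = 1 - ∑' k : ℕ, c k * (lam * θ^(2*(k+1)) / (1 - μ * θ^(2*(k+1)))) := by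
        congr 1
        exact tsum_congr (fun k => (hcol k).tsum_eq)
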